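/- The characteristic function χ^{(L,R)} of a factorization system (L,R) on a finite lattice P is a monotone endomorphism of P. -/
import Mathlib

/-- A (weak = orthogonal) factorization system on a poset `P`, viewed as a thin category:
a pair of classes of relations `(L, R)` refining `≤` such that every relation factors as a
left relation followed by a right relation, and `L = ᗮR`, `R = Lᗮ` with respect to the
lifting property. -/
structure FacSys (P : Type*) [PartialOrder P] where
  L : P → P → Prop
  R : P → P → Prop
  L_le : ∀ {x y}, L x y → x ≤ y
  R_le : ∀ {x y}, R x y → x ≤ y
  fact : ∀ {x y}, x ≤ y → ∃ z, L x z ∧ R z y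
  L_iff : ∀ x y, L x y ↔ x ≤ y ∧ ∀ a b, R a b → x ≤ a → y ≤ b → y ≤ a
  R_iff : ∀ x y, R x y ↔ x ≤ y ∧ ∀ a b, L a b → a ≤ x → b ≤ y → b ≤ x

/-- The characteristic function of a factorization system on a finite bounded lattice
is a monotone endomorphism. -/
theorem stmt3 {P : Type*} [Lattice P] [BoundedOrder P] [Finite P] (F : FacSys P)
    (chi : P → P) (hchi : ∀ x, F.L ⊥ (chi x) ∧ F.R (chi x) x) :
    Monotone chi := by
  intro x y hxy
  obtain ⟨hLx, hRx⟩ := hchi x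
  obtain ⟨_, hRy⟩ := hchi y
  exact ((F.L_iff ⊥ (chi x)).mp hLx).2 (chi y) y hRy bot_le ((F.R_le hRx).trans hxy)
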